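/- arXiv:2205.09964 — 2 statements merged into one kernel-verified Lean document; each statement's English description precedes it below -/
import Mathlib

section
/- The function f ↦ ‖f‖_x on A is a multiplicative non-Archimedean norm extending the trivial valuation on k; precisely: ‖1‖_x = 1; ‖f‖_x = 0 if and only if f = 0; ‖f₁ f₂‖_x = ‖f₁‖_x · ‖f₂‖_x for all f₁, f₂ ∈ A; ‖f₁ + f₂‖_x ≤ max(‖f₁‖_x, ‖f₂‖_x) for all f₁, f₂ ∈ A; and ‖c f‖_x = ‖f‖_x for every nonzero c ∈ k and f ∈ A. (Consequently ‖·‖_x extends to a valuation on the fraction field Frac(A), trivial on k.) -/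
open TensorProduct

/-- The translate `g • f` of an element `f` of a bialgebra `A` by a `k`-point
`g : A →ₐ[k] k`: the image of the comultiplication `Δ f ∈ A ⊗[k] A` under
`g ⊗ id` followed by the identification `k ⊗[k] A ≅ A`. -/
noncomputable def ptTranslate {k A : Type*} [CommSemiring k] [Semiring A]
    [Bialgebra k A] (g : A →ₐ[k] k) (f : A) : A :=
  (TensorProduct.lid k A)
    ((TensorProduct.map g.toLinearMap (LinearMap.id : A →ₗ[k] A))
      (Coalgebra.comul (R := k) f))

/-- `‖f‖ₓ := sup { ‖x(g • f)‖ : g : A →ₐ[k] k }`. -/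
noncomputable def normx {k A L : Type*} [CommSemiring k] [Semiring A]
    [Bialgebra k A] [CommSemiring L] [Algebra k L]
    (v : L → NNReal) (x : A →ₐ[k] L) (f : A) : NNReal :=
  ⨆ g : A →ₐ[k] k, v (x (ptTranslate g f))

section Translate
variable {k A : Type*} [CommSemiring k] [Semiring A] [Bialgebra k A]

noncomputable def ptTranslateL (g : A →ₐ[k] k) : A →ₗ[k] A :=
  (TensorProduct.lid k A).toLinearMap ∘ₗ
    (TensorProduct.map g.toLinearMap (LinearMap.id : A →ₗ[k] A)) ∘ₗ
      (Coalgebra.comul (R := k))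

lemma ptTranslate_eq_L (g : A →ₐ[k] k) (f : A) : ptTranslate g f = ptTranslateL g f := rfl

lemma ptTranslate_repr {ι : Type*} (g : A →ₐ[k] k) (f : A) (r : Coalgebra.Repr k f ι) :
    ptTranslate g f = ∑ i ∈ r.index, g (r.left i) • r.right i := by
  rw [ptTranslate, ← r.eq]
  simp [TensorProduct.lid_tmul, map_sum]

noncomputable def ptTranslateA (g : A →ₐ[k] k) : A →ₐ[k] A :=
  ((Algebra.TensorProduct.lid k A).toAlgHom.comp
    (Algebra.TensorProduct.map g (AlgHom.id k A))).comp (Bialgebra.comulAlgHom k A)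

lemma ptTranslateA_apply (g : A →ₐ[k] k) (f : A) : ptTranslateA g f = ptTranslate g f := by
  rw [ptTranslateA, ptTranslate]
  show (Algebra.TensorProduct.lid k A).toAlgHom
      ((Algebra.TensorProduct.map g (AlgHom.id k A)) (Coalgebra.comul (R := k) f)) = _
  generalize (Coalgebra.comul (R := k) f) = t
  induction t with
  | zero => simp
  | tmul a b => simp [Algebra.TensorProduct.lid_tmul, TensorProduct.lid_tmul]
  | add s t hs ht => simp only [map_add, hs, ht]

/-- convolution of a `k`-point with a point valued in any algebra. -/
noncomputable def convPt {B : Type*} [Semiring B] [Algebra k B]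
    (g : A →ₐ[k] k) (y : A →ₐ[k] B) : A →ₐ[k] B :=
  y.comp (ptTranslateA g)

lemma convPt_apply {B : Type*} [Semiring B] [Algebra k B]
    (g : A →ₐ[k] k) (y : A →ₐ[k] B) (f : A) :
    convPt g y f = y (ptTranslate g f) := by
  rw [convPt, AlgHom.comp_apply, ptTranslateA_apply]

lemma ptTranslate_counit (f : A) : ptTranslate (Bialgebra.counitAlgHom k A) f = f := by
  obtain r := Coalgebra.Repr.arbitrary k f
  rw [ptTranslate_repr _ f r]
  have h := congrArg (TensorProduct.lid k A) (Coalgebra.sum_counit_tmul_eq (R := k) r)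
  simp only [map_sum, TensorProduct.lid_tmul, one_smul] at h
  simpa only [Bialgebra.counitAlgHom_apply] using h

lemma convPt_counit_left {B : Type*} [Semiring B] [Algebra k B] (y : A →ₐ[k] B) :
    convPt (Bialgebra.counitAlgHom k A) y = y := by
  ext f; rw [convPt_apply, ptTranslate_counit]

lemma convPt_counit_right (g : A →ₐ[k] k) :
    convPt g (Bialgebra.counitAlgHom k A) = g := by
  ext f
  obtain r := Coalgebra.Repr.arbitrary k f
  rw [convPt_apply, ptTranslate_repr _ f r]
  have h := congrArg (fun t => g ((TensorProduct.rid k A) t))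
    (Coalgebra.sum_tmul_counit_eq (R := k) r)
  simp only [map_sum, TensorProduct.rid_tmul, map_smul, one_smul] at h
  rw [← h, map_sum]
  refine Finset.sum_congr rfl fun i _ => ?_
  simp only [Bialgebra.counitAlgHom_apply, map_smul, smul_eq_mul]
  ring

/-- The key coassociativity property. -/
lemma ptTranslate_ptTranslate (g g' : A →ₐ[k] k) (f : A) :
    ptTranslate g' (ptTranslate g f) = ptTranslate (convPt g g') f := by
  classical
  obtain r := Coalgebra.Repr.arbitrary k f
  set r1 : (i : r.ι) → Coalgebra.Repr k (r.left i) (A × A) :=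
    fun i => Coalgebra.Repr.arbitrary k (r.left i) with hr1
  set r2 : (i : r.ι) → Coalgebra.Repr k (r.right i) (A × A) :=
    fun i => Coalgebra.Repr.arbitrary k (r.right i) with hr2
  -- Φ : A ⊗ (A ⊗ A) → A,  a ⊗ (b ⊗ c) ↦ g a • (g' b • c)
  set Φ : A ⊗[k] (A ⊗[k] A) →ₗ[k] A :=
    (TensorProduct.lid k A).toLinearMap ∘ₗ
      (TensorProduct.map g.toLinearMap
        ((TensorProduct.lid k A).toLinearMap ∘ₗ
          (TensorProduct.map g'.toLinearMap (LinearMap.id : A →ₗ[k] A)))) with hΦ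
  have hΦt : ∀ (a b c : A), Φ (a ⊗ₜ[k] (b ⊗ₜ[k] c)) = g a • (g' b • c) := by
    intro a b c
    simp only [hΦ, LinearMap.coe_comp, LinearEquiv.coe_coe, Function.comp_apply,
      TensorProduct.map_tmul, TensorProduct.lid_tmul, LinearMap.id_coe, id_eq,
      map_smul, AlgHom.toLinearMap_apply]
  have key := congrArg Φ (Coalgebra.sum_tmul_tmul_eq (R := k) r r1 r2)
  simp only [map_sum, hΦt] at key
  calc ptTranslate g' (ptTranslate g f)
      = ∑ i ∈ r.index, g (r.left i) • ptTranslate g' (r.right i) := by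
        rw [ptTranslate_repr g f r, ptTranslate_eq_L, map_sum]
        simp [map_smul, ptTranslate_eq_L]
    _ = ∑ i ∈ r.index, ∑ j ∈ (r2 i).index,
          g (r.left i) • (g' ((r2 i).left j) • (r2 i).right j) := by
        refine Finset.sum_congr rfl fun i _ => ?_
        rw [ptTranslate_repr g' (r.right i) (r2 i), Finset.smul_sum]
    _ = ∑ i ∈ r.index, ∑ j ∈ (r1 i).index,
          g ((r1 i).left j) • (g' ((r1 i).right j) • r.right i) := key.symm
    _ = ptTranslate (convPt g g') f := by
        rw [ptTranslate_repr (convPt g g') f r]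
        refine Finset.sum_congr rfl fun i _ => ?_
        rw [convPt_apply, ptTranslate_repr g (r.left i) (r1 i), map_sum]
        rw [Finset.sum_smul]
        refine Finset.sum_congr rfl fun j _ => ?_
        rw [map_smul, smul_assoc]

lemma convPt_assoc (h g : A →ₐ[k] k) {B : Type*} [Semiring B] [Algebra k B] (g' : A →ₐ[k] B) :
    convPt (convPt h g) g' = convPt h (convPt g g') := by
  ext f
  rw [convPt_apply, ← ptTranslate_ptTranslate, convPt_apply, convPt_apply,
    ptTranslate_ptTranslate]

end Translate


section Inverse
variable {k A : Type*} [CommSemiring k] [Semiring A] [HopfAlgebra k A]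

/-- product of two comultiplication representations -/
noncomputable def reprMul {ι κ : Type*} {c d : A} (p : Coalgebra.Repr k c ι)
    (q : Coalgebra.Repr k d κ) : Coalgebra.Repr k (c * d) (ι × κ) where
  index := p.index ×ˢ q.index
  left := fun ij => p.left ij.1 * q.left ij.2
  right := fun ij => p.right ij.1 * q.right ij.2
  eq := by
    rw [Bialgebra.comul_mul, ← p.eq, ← q.eq, Finset.sum_mul_sum]
    rw [Finset.sum_product]
    exact Finset.sum_congr rfl fun i _ => Finset.sum_congr rfl fun j _ =>
      (Algebra.TensorProduct.tmul_mul_tmul _ _ _ _).symm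

variable (g₀ : A →ₐ[k] k)

/-- convolution-inverse of a point, as a linear map -/
noncomputable def invPtL : A →ₗ[k] k := g₀.toLinearMap ∘ₗ HopfAlgebra.antipode (R := k)

lemma invPtL_F1 {ι : Type*} {c : A} (r : Coalgebra.Repr k c ι) :
    ∑ i ∈ r.index, invPtL g₀ (r.left i) * g₀ (r.right i) = Coalgebra.counit (R := k) c := by
  have h := congrArg g₀ (HopfAlgebra.sum_antipode_mul_eq_algebraMap_counit (R := k) r)
  simp only [map_sum, map_mul, AlgHom.commutes, Algebra.algebraMap_self, RingHom.id_apply] at h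
  simpa [invPtL] using h

lemma invPtL_F2 {ι : Type*} {c : A} (r : Coalgebra.Repr k c ι) :
    ∑ i ∈ r.index, g₀ (r.left i) * invPtL g₀ (r.right i) = Coalgebra.counit (R := k) c := by
  have h := congrArg g₀ (HopfAlgebra.sum_mul_antipode_eq_algebraMap_counit (R := k) r)
  simp only [map_sum, map_mul, AlgHom.commutes, Algebra.algebraMap_self, RingHom.id_apply] at h
  simpa [invPtL] using h

lemma invPtL_one : invPtL g₀ 1 = 1 := by
  have h := invPtL_F1 g₀ (c := 1)
    ⟨(Finset.univ : Finset Unit), fun _ => 1, fun _ => 1,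
      by simp [Bialgebra.comul_one, Algebra.TensorProduct.one_def]⟩
  simpa [Bialgebra.counit_one] using h

lemma repr_counit_left {ι : Type*} {c : A} (r : Coalgebra.Repr k c ι) :
    ∑ i ∈ r.index, Coalgebra.counit (R := k) (r.left i) • r.right i = c := by
  have h := congrArg (TensorProduct.lid k A) (Coalgebra.sum_counit_tmul_eq (R := k) r)
  simpa only [map_sum, TensorProduct.lid_tmul, one_smul] using h

lemma repr_counit_right {ι : Type*} {c : A} (r : Coalgebra.Repr k c ι) :
    ∑ i ∈ r.index, Coalgebra.counit (R := k) (r.right i) • r.left i = c := by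
  have h := congrArg (TensorProduct.rid k A) (Coalgebra.sum_tmul_counit_eq (R := k) r)
  simpa only [map_sum, TensorProduct.rid_tmul, one_smul] using h

lemma invPtL_mul (a b : A) : invPtL g₀ (a * b) = invPtL g₀ a * invPtL g₀ b := by
  classical
  set u := invPtL g₀ with hu
  obtain ra := Coalgebra.Repr.arbitrary k a
  obtain rb := Coalgebra.Repr.arbitrary k b
  set ra1 : (i : ra.ι) → Coalgebra.Repr k (ra.left i) (A × A) :=
    fun i => Coalgebra.Repr.arbitrary k (ra.left i) with hra1
  set ra2 : (i : ra.ι) → Coalgebra.Repr k (ra.right i) (A × A) :=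
    fun i => Coalgebra.Repr.arbitrary k (ra.right i) with hra2
  set rb1 : (i : rb.ι) → Coalgebra.Repr k (rb.left i) (A × A) :=
    fun i => Coalgebra.Repr.arbitrary k (rb.left i) with hrb1
  set rb2 : (i : rb.ι) → Coalgebra.Repr k (rb.right i) (A × A) :=
    fun i => Coalgebra.Repr.arbitrary k (rb.right i) with hrb2
  set Φ : (A ⊗[k] (A ⊗[k] A)) ⊗[k] (A ⊗[k] (A ⊗[k] A)) →ₗ[k] k :=
    (LinearMap.mul' k k) ∘ₗ
      (TensorProduct.map (u ∘ₗ LinearMap.mul' k A)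
        ((LinearMap.mul' k k) ∘ₗ
          (TensorProduct.map (g₀.toLinearMap ∘ₗ LinearMap.mul' k A)
            ((LinearMap.mul' k k) ∘ₗ TensorProduct.map u u)) ∘ₗ
          (tensorTensorTensorComm k A A A A).toLinearMap)) ∘ₗ
      (tensorTensorTensorComm k A (A ⊗[k] A) A (A ⊗[k] A)).toLinearMap with hΦ
  have hΦt : ∀ (a₁ a₂ a₃ b₁ b₂ b₃ : A),
      Φ ((a₁ ⊗ₜ[k] (a₂ ⊗ₜ[k] a₃)) ⊗ₜ[k] (b₁ ⊗ₜ[k] (b₂ ⊗ₜ[k] b₃))) =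
        u (a₁ * b₁) * (g₀ (a₂ * b₂) * (u a₃ * u b₃)) := by
    intro a₁ a₂ a₃ b₁ b₂ b₃
    simp [hΦ, TensorProduct.tensorTensorTensorComm_tmul, LinearMap.mul'_apply]
  have hXa := Coalgebra.sum_tmul_tmul_eq (R := k) ra ra1 ra2
  have hXb := Coalgebra.sum_tmul_tmul_eq (R := k) rb rb1 rb2
  have hE : Φ ((∑ i ∈ ra.index, ∑ j ∈ (ra1 i).index,
        (ra1 i).left j ⊗ₜ[k] ((ra1 i).right j ⊗ₜ[k] ra.right i)) ⊗ₜ[k]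
      (∑ i' ∈ rb.index, ∑ j' ∈ (rb1 i').index,
        (rb1 i').left j' ⊗ₜ[k] ((rb1 i').right j' ⊗ₜ[k] rb.right i'))) =
      Φ ((∑ i ∈ ra.index, ∑ j ∈ (ra2 i).index,
        ra.left i ⊗ₜ[k] ((ra2 i).left j ⊗ₜ[k] (ra2 i).right j)) ⊗ₜ[k]
      (∑ i' ∈ rb.index, ∑ j' ∈ (rb2 i').index,
        rb.left i' ⊗ₜ[k] ((rb2 i').left j' ⊗ₜ[k] (rb2 i').right j'))) := by
    rw [hXa, hXb]
  simp only [TensorProduct.sum_tmul, TensorProduct.tmul_sum, map_sum, hΦt] at hE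
  -- LHS of hE is u a * u b
  have hL : (∑ i' ∈ rb.index, ∑ j' ∈ (rb1 i').index, ∑ i ∈ ra.index, ∑ j ∈ (ra1 i).index,
      u ((ra1 i).left j * (rb1 i').left j') *
        (g₀ ((ra1 i).right j * (rb1 i').right j') * (u (ra.right i) * u (rb.right i')))) =
      u a * u b := by
    have inner : ∀ i' ∈ rb.index, ∀ i ∈ ra.index,
        (∑ j' ∈ (rb1 i').index, ∑ j ∈ (ra1 i).index,
          u ((ra1 i).left j * (rb1 i').left j') *
            (g₀ ((ra1 i).right j * (rb1 i').right j') * (u (ra.right i) * u (rb.right i')))) =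
        (Coalgebra.counit (R := k) (ra.left i) * Coalgebra.counit (R := k) (rb.left i')) *
          (u (ra.right i) * u (rb.right i')) := by
      intro i' _ i _
      have hF := invPtL_F1 g₀ (reprMul (ra1 i) (rb1 i'))
      simp only [reprMul] at hF
      rw [Finset.sum_product] at hF
      rw [Bialgebra.counit_mul] at hF
      rw [← hF, Finset.sum_comm, Finset.sum_mul]
      refine Finset.sum_congr rfl fun j _ => ?_
      rw [Finset.sum_mul]
      exact Finset.sum_congr rfl fun j' _ => by ring
    calc (∑ i' ∈ rb.index, ∑ j' ∈ (rb1 i').index, ∑ i ∈ ra.index, ∑ j ∈ (ra1 i).index,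
          u ((ra1 i).left j * (rb1 i').left j') *
            (g₀ ((ra1 i).right j * (rb1 i').right j') * (u (ra.right i) * u (rb.right i'))))
        = ∑ i' ∈ rb.index, ∑ i ∈ ra.index,
            (Coalgebra.counit (R := k) (ra.left i) * Coalgebra.counit (R := k) (rb.left i')) *
              (u (ra.right i) * u (rb.right i')) := by
          refine Finset.sum_congr rfl fun i' hi' => ?_
          rw [Finset.sum_comm]
          exact Finset.sum_congr rfl fun i hi => inner i' hi' i hi
      _ = u a * u b := by
          conv_rhs => rw [← repr_counit_left ra, ← repr_counit_left rb]
          rw [map_sum, map_sum, Finset.sum_mul_sum, Finset.sum_comm]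
          refine Finset.sum_congr rfl fun i' _ => Finset.sum_congr rfl fun i _ => ?_
          rw [map_smul, map_smul, smul_eq_mul, smul_eq_mul]
          ring
  -- RHS of hE is u (a * b)
  have hR : (∑ i' ∈ rb.index, ∑ j' ∈ (rb2 i').index, ∑ i ∈ ra.index, ∑ j ∈ (ra2 i).index,
      u (ra.left i * rb.left i') *
        (g₀ ((ra2 i).left j * (rb2 i').left j') * (u ((ra2 i).right j) * u ((rb2 i').right j')))) =
      u (a * b) := by
    have inner : ∀ i' ∈ rb.index, ∀ i ∈ ra.index,
        (∑ j' ∈ (rb2 i').index, ∑ j ∈ (ra2 i).index,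
          u (ra.left i * rb.left i') *
            (g₀ ((ra2 i).left j * (rb2 i').left j') *
              (u ((ra2 i).right j) * u ((rb2 i').right j')))) =
        u (ra.left i * rb.left i') *
          (Coalgebra.counit (R := k) (ra.right i) * Coalgebra.counit (R := k) (rb.right i')) := by
      intro i' _ i _
      have expand : u (ra.left i * rb.left i') *
          ((∑ j ∈ (ra2 i).index, g₀ ((ra2 i).left j) * u ((ra2 i).right j)) *
           (∑ j' ∈ (rb2 i').index, g₀ ((rb2 i').left j') * u ((rb2 i').right j'))) =
          (∑ j' ∈ (rb2 i').index, ∑ j ∈ (ra2 i).index,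
            u (ra.left i * rb.left i') *
              (g₀ ((ra2 i).left j * (rb2 i').left j') *
                (u ((ra2 i).right j) * u ((rb2 i').right j')))) := by
        rw [Finset.sum_mul_sum, Finset.mul_sum, Finset.sum_comm]
        refine Finset.sum_congr rfl fun j' _ => ?_
        rw [Finset.mul_sum]
        refine Finset.sum_congr rfl fun j _ => ?_
        rw [map_mul g₀]
        ring
      rw [← expand, invPtL_F2 g₀ (ra2 i), invPtL_F2 g₀ (rb2 i')]
    calc (∑ i' ∈ rb.index, ∑ j' ∈ (rb2 i').index, ∑ i ∈ ra.index, ∑ j ∈ (ra2 i).index,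
          u (ra.left i * rb.left i') *
            (g₀ ((ra2 i).left j * (rb2 i').left j') *
              (u ((ra2 i).right j) * u ((rb2 i').right j'))))
        = ∑ i' ∈ rb.index, ∑ i ∈ ra.index, u (ra.left i * rb.left i') *
            (Coalgebra.counit (R := k) (ra.right i) * Coalgebra.counit (R := k) (rb.right i')) := by
          refine Finset.sum_congr rfl fun i' hi' => ?_
          rw [Finset.sum_comm]
          exact Finset.sum_congr rfl fun i hi => inner i' hi' i hi
      _ = u (a * b) := by
          conv_rhs => rw [← repr_counit_right ra, ← repr_counit_right rb]
          rw [Finset.sum_mul_sum, map_sum, Finset.sum_comm]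
          refine Finset.sum_congr rfl fun i' _ => ?_
          rw [map_sum]
          refine Finset.sum_congr rfl fun i _ => ?_
          rw [smul_mul_assoc, mul_smul_comm, map_smul, map_smul, smul_eq_mul, smul_eq_mul]
          ring
  rw [hL, hR] at hE
  exact hE.symm
end Inverse

section Points
variable {k A : Type*} [Field k] [IsAlgClosed k] [CommRing A] [Algebra k A]

lemma residuePoint (hfg : Algebra.FiniteType k A) (m : Ideal A) (hm : m.IsMaximal) :
    ∃ g : A →ₐ[k] k, ∀ a, (g a = 0 ↔ a ∈ m) := by
  haveI := hm
  letI : Field (A ⧸ m) := Ideal.Quotient.field m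
  haveI : Algebra.FiniteType k (A ⧸ m) :=
    by haveI := hfg; exact Algebra.FiniteType.of_surjective (Ideal.Quotient.mkₐ k m) (Ideal.Quotient.mkₐ_surjective k m)
  haveI : Module.Finite k (A ⧸ m) := finite_of_finite_type_of_isJacobsonRing k (A ⧸ m)
  haveI : Algebra.IsIntegral k (A ⧸ m) := Algebra.IsIntegral.of_finite k _
  have hsurj : Function.Surjective (algebraMap k (A ⧸ m)) :=
    IsAlgClosed.algebraMap_bijective_of_isIntegral.2
  have hinj : Function.Injective (algebraMap k (A ⧸ m)) := (algebraMap k (A ⧸ m)).injective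
  have hbij : Function.Bijective (Algebra.ofId k (A ⧸ m)) := ⟨hinj, hsurj⟩
  let e : k ≃ₐ[k] (A ⧸ m) := AlgEquiv.ofBijective (Algebra.ofId k (A ⧸ m)) hbij
  refine ⟨e.symm.toAlgHom.comp (Ideal.Quotient.mkₐ k m), fun a => ?_⟩
  have : e.symm ((Ideal.Quotient.mkₐ k m) a) = 0 ↔ (Ideal.Quotient.mkₐ k m) a = 0 := by
    constructor
    · intro h
      have := congrArg e h
      simpa using this
    · intro h; rw [h, map_zero]
  simpa [this] using Ideal.Quotient.eq_zero_iff_mem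

lemma pointsVanish [IsDomain A] (hfg : Algebra.FiniteType k A) {f : A}
    (h : ∀ g : A →ₐ[k] k, g f = 0) : f = 0 := by
  haveI := hfg
  haveI : IsJacobsonRing A := isJacobsonRing_of_finiteType (A := k)
  have hmem : f ∈ Ideal.jacobson (⊥ : Ideal A) := by
    rw [Ideal.jacobson]
    refine Ideal.mem_sInf.mpr fun {J} hJ => ?_
    obtain ⟨g, hg⟩ := residuePoint hfg J hJ.2
    exact (hg f).mp (h g)
  rw [← Ideal.radical_eq_jacobson, Ideal.radical_bot_of_noZeroDivisors] at hmem
  simpa using hmem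

lemma existsPointNe [IsDomain A] (hfg : Algebra.FiniteType k A) {f : A} (hf : f ≠ 0) :
    ∃ g : A →ₐ[k] k, g f ≠ 0 := by
  by_contra h
  push_neg at h
  exact hf (pointsVanish hfg h)

lemma idealPoint (hfg : Algebra.FiniteType k A) (I : Ideal A) (hI : I ≠ ⊤) :
    ∃ g : A →ₐ[k] k, ∀ a ∈ I, g a = 0 := by
  obtain ⟨m, hm, him⟩ := Ideal.exists_le_maximal I hI
  obtain ⟨g, hg⟩ := residuePoint hfg m hm
  exact ⟨g, fun a ha => (hg a).mpr (him ha)⟩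

end Points

section Valuation
variable {k L : Type*} [Field k] [Field L] [Algebra k L]
variable {v : L → NNReal}
variable (hmul : ∀ a b : L, v (a * b) = v a * v b)
variable (hadd : ∀ a b : L, v (a + b) ≤ max (v a) (v b))
variable (hzero : ∀ a : L, v a = 0 ↔ a = 0)
variable (htriv : ∀ c : k, c ≠ 0 → v (algebraMap k L c) = 1)

include hmul hzero in
lemma v_one : v 1 = 1 := by
  have h := hmul 1 1
  rw [mul_one] at h
  have h1 : v 1 ≠ 0 := fun h0 => one_ne_zero ((hzero 1).mp h0)
  exact (mul_left_cancel₀ h1 (by rw [mul_one, ← h])).symm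

include hzero in
lemma v_zero : v (0 : L) = 0 := (hzero 0).mpr rfl

include hmul hzero in
lemma v_neg (a : L) : v (-a) = v a := by
  have key : v (-1 : L) = 1 := by
    have hx : v (-1 : L) * v (-1) = 1 := by
      rw [← hmul]
      simpa using v_one hmul hzero
    have x0 : (0:ℝ) ≤ (v (-1 : L) : ℝ) := (v (-1 : L)).coe_nonneg
    have hxr : (v (-1 : L) : ℝ) * (v (-1 : L) : ℝ) = 1 := by exact_mod_cast hx
    have hle : (v (-1 : L) : ℝ) ≤ 1 := by nlinarith [sq_nonneg ((v (-1:L) : ℝ) - 1)]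
    have hge : (1:ℝ) ≤ (v (-1 : L) : ℝ) := by nlinarith [sq_nonneg ((v (-1:L) : ℝ) + 1)]
    have : (v (-1 : L) : ℝ) = 1 := le_antisymm hle hge
    exact_mod_cast this
  calc v (-a) = v ((-1 : L) * a) := by rw [neg_one_mul]
    _ = v (-1 : L) * v a := hmul _ _
    _ = v a := by rw [key, one_mul]

include hmul htriv in
lemma v_smul {c : k} (hc : c ≠ 0) (a : L) : v (c • a) = v a := by
  rw [Algebra.smul_def, hmul, htriv c hc, one_mul]

include hmul hzero htriv in
lemma v_smul_le (c : k) (a : L) : v (c • a) ≤ v a := by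
  rcases eq_or_ne c 0 with rfl | hc
  · simp [v_zero hzero]
  · rw [v_smul hmul htriv hc]

include hadd hzero in
lemma v_sum_le {ι : Type*} (s : Finset ι) (w : ι → L) (t : NNReal)
    (h : ∀ i ∈ s, v (w i) ≤ t) : v (∑ i ∈ s, w i) ≤ t := by
  classical
  induction s using Finset.cons_induction with
  | empty => simp [v_zero hzero]
  | cons a s ha ih =>
    rw [Finset.sum_cons]
    refine (hadd _ _).trans (max_le (h a (Finset.mem_cons_self a s)) ?_)
    exact ih fun i hi => h i (Finset.mem_cons_of_mem hi)

include hadd hzero in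
lemma v_sum_lt {ι : Type*} (s : Finset ι) (w : ι → L) (t : NNReal) (ht : 0 < t)
    (h : ∀ i ∈ s, v (w i) < t) : v (∑ i ∈ s, w i) < t := by
  classical
  induction s using Finset.cons_induction with
  | empty => simpa [v_zero hzero] using ht
  | cons a s ha ih =>
    rw [Finset.sum_cons]
    refine lt_of_le_of_lt (hadd _ _) (max_lt (h a (Finset.mem_cons_self a s)) ?_)
    exact ih fun i hi => h i (Finset.mem_cons_of_mem hi)

include hmul hadd hzero in
lemma v_add_eq {a b : L} (h : v b < v a) : v (a + b) = v a := by
  refine le_antisymm ((hadd a b).trans (max_le le_rfl h.le)) ?_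
  have h2 := hadd (a + b) (-b)
  rw [add_neg_cancel_right, v_neg hmul hzero] at h2
  rcases le_max_iff.mp h2 with h3 | h3
  · exact h3
  · exact absurd (lt_of_le_of_lt h3 h) (lt_irrefl _)

include hmul hadd hzero htriv in
lemma linIndep_of_distinct_v {m : ℕ} (w : Fin m → L) (h0 : ∀ i, v (w i) ≠ 0)
    (hd : ∀ i j, i ≠ j → v (w i) ≠ v (w j)) : LinearIndependent k w := by
  classical
  rw [Fintype.linearIndependent_iff]
  intro g hg
  by_contra hne
  push_neg at hne
  obtain ⟨i₁, hi₁⟩ := hne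
  set s := Finset.univ.filter (fun i => g i ≠ 0) with hs_def
  have hsne : s.Nonempty := ⟨i₁, by simp [hs_def, hi₁]⟩
  obtain ⟨i₀, hi₀s, hmax⟩ := Finset.exists_max_image s (fun i => v (w i)) hsne
  have hg₀ : g i₀ ≠ 0 := (Finset.mem_filter.mp hi₀s).2
  have hsum : ∑ i ∈ s, g i • w i = 0 := by
    rw [hs_def, Finset.sum_filter_of_ne (fun i _ h => by
      intro hgi
      exact h (by rw [hgi, zero_smul]))]
    exact hg
  rw [← Finset.add_sum_erase _ _ hi₀s] at hsum
  have hpos : 0 < v (w i₀) := pos_iff_ne_zero.mpr (h0 i₀)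
  have hrest : v (∑ i ∈ s.erase i₀, g i • w i) < v (w i₀) := by
    refine v_sum_lt hadd hzero _ _ _ hpos fun i hi => ?_
    have hine : i ≠ i₀ := Finset.ne_of_mem_erase hi
    have his : i ∈ s := Finset.mem_of_mem_erase hi
    refine lt_of_le_of_lt (v_smul_le hmul hzero htriv _ _) ?_
    exact lt_of_le_of_ne (hmax i his) (hd i i₀ hine)
  have hvtot : v (g i₀ • w i₀ + ∑ i ∈ s.erase i₀, g i • w i) = v (w i₀) := by
    rw [v_add_eq hmul hadd hzero (by rwa [v_smul hmul htriv hg₀]),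
      v_smul hmul htriv hg₀]
  rw [hsum, v_zero hzero] at hvtot
  exact h0 i₀ hvtot.symm

include hmul hadd hzero htriv in
lemma finite_v_span {n : ℕ} (lam : Fin n → L) :
    Set.Finite (v '' ((Submodule.span k (Set.range lam) : Submodule k L) : Set L)) := by
  classical
  by_contra hInf
  rw [← Set.Infinite] at hInf
  have hInf' : ((v '' ((Submodule.span k (Set.range lam) : Submodule k L) : Set L)) \
      {0}).Infinite := hInf.diff (Set.finite_singleton 0)
  obtain ⟨t, hts, htc⟩ := hInf'.exists_subset_card_eq (n + 1)
  have hchoose : ∀ x : {y // y ∈ t}, ∃ w : L,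
      w ∈ (Submodule.span k (Set.range lam) : Submodule k L) ∧ v w = (x : NNReal) := by
    intro x
    have := hts x.2
    obtain ⟨⟨w, hw, hvw⟩, -⟩ := this
    exact ⟨w, hw, hvw⟩
  choose wfun hwmem hwval using hchoose
  have hxne : ∀ x : {y // y ∈ t}, (x : NNReal) ≠ 0 := by
    intro x
    have := hts x.2
    simpa using this.2
  let e : Fin (n + 1) ≃ {y // y ∈ t} := (Finset.equivFinOfCardEq htc).symm
  set w : Fin (n + 1) → L := fun i => wfun (e i) with hw_def
  have h0 : ∀ i, v (w i) ≠ 0 := fun i => by rw [hw_def]; rw [hwval]; exact hxne (e i)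
  have hd : ∀ i j, i ≠ j → v (w i) ≠ v (w j) := by
    intro i j hij
    rw [hw_def]
    simp only [hwval]
    intro hcontra
    exact hij (e.injective (Subtype.ext hcontra))
  have hli : LinearIndependent k w := linIndep_of_distinct_v hmul hadd hzero htriv w h0 hd
  -- move into the span
  set W : Submodule k L := Submodule.span k (Set.range lam)
  haveI : FiniteDimensional k W := FiniteDimensional.span_of_finite k (Set.finite_range lam)
  set w' : Fin (n + 1) → W := fun i => ⟨w i, hwmem (e i)⟩ with hw'_def
  have hli' : LinearIndependent k w' := by
    have : w = (W.subtype ∘ w') := by funext i; rfl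
    rw [this] at hli
    exact LinearIndependent.of_comp W.subtype hli
  have hcard := hli'.fintype_card_le_finrank
  simp only [Fintype.card_fin] at hcard
  have hrank : Module.finrank k W ≤ n := by
    have h1 := finrank_span_le_card (R := k) (Set.range lam)
    have h2 : (Set.range lam).toFinset.card ≤ n := by
      rw [Set.toFinset_range]
      exact (Finset.card_image_le).trans (by simp)
    exact h1.trans h2
  omega
end Valuation
section ReprIndep
variable {k A : Type*} [Field k] [AddCommGroup A] [Module k A]
open TensorProduct in
lemma exists_repr_linIndep (t : A ⊗[k] A) :
    ∃ (n : ℕ) (l r : Fin n → A), LinearIndependent k l ∧ t = ∑ i, l i ⊗ₜ[k] r i := by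
  classical
  obtain ⟨S, hS⟩ := TensorProduct.exists_finset t
  set W : Submodule k A := Submodule.span k (Prod.fst '' (S : Set (A × A))) with hW
  haveI : FiniteDimensional k W :=
    FiniteDimensional.span_of_finite k ((S.finite_toSet).image _)
  set n := Module.finrank k W with hn
  set b := Module.finBasis k W with hb
  have hmem : ∀ p ∈ S, (p : A × A).1 ∈ W := fun p hp =>
    Submodule.subset_span ⟨p, hp, rfl⟩
  refine ⟨n, fun i => (b i : A),
    fun i => ∑ p ∈ S.attach, (b.repr ⟨(p : A × A).1, hmem p p.2⟩ i) • (p : A × A).2, ?_, ?_⟩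
  · exact b.linearIndependent.map' W.subtype (Submodule.ker_subtype W)
  · rw [hS, ← Finset.sum_attach S (fun p => p.1 ⊗ₜ[k] p.2)]
    have hp1 : ∀ p : {x // x ∈ S}, (p : A × A).1 =
        ∑ i, (b.repr ⟨(p : A × A).1, hmem p p.2⟩ i) • (b i : A) := by
      intro p
      have := b.sum_repr ⟨(p : A × A).1, hmem p p.2⟩
      have hcoe := congrArg (Submodule.subtype W) this
      simp only [map_sum, map_smul, Submodule.coe_subtype] at hcoe
      exact hcoe.symm
    calc ∑ p ∈ S.attach, (p : A × A).1 ⊗ₜ[k] (p : A × A).2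
        = ∑ p ∈ S.attach, ∑ i, ((b.repr ⟨(p : A × A).1, hmem p p.2⟩ i) • (b i : A))
            ⊗ₜ[k] (p : A × A).2 := by
          refine Finset.sum_congr rfl fun p _ => ?_
          rw [← TensorProduct.sum_tmul, ← hp1]
      _ = ∑ i, ∑ p ∈ S.attach, (b i : A) ⊗ₜ[k]
            ((b.repr ⟨(p : A × A).1, hmem p p.2⟩ i) • (p : A × A).2) := by
          rw [Finset.sum_comm]
          exact Finset.sum_congr rfl fun i _ => Finset.sum_congr rfl fun p _ => by
            rw [TensorProduct.smul_tmul]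
      _ = ∑ i, (b i : A) ⊗ₜ[k]
            (∑ p ∈ S.attach, (b.repr ⟨(p : A × A).1, hmem p p.2⟩ i) • (p : A × A).2) := by
          exact Finset.sum_congr rfl fun i _ => by rw [TensorProduct.tmul_sum]
end ReprIndep

section Main
variable {k A L : Type*} [Field k] [IsAlgClosed k]
    [CommRing A] [IsDomain A] [HopfAlgebra k A]
    [Field L] [Algebra k L]
variable (x : A →ₐ[k] L)
variable {v : L → NNReal}
variable (hmul : ∀ a b : L, v (a * b) = v a * v b)
variable (hadd : ∀ a b : L, v (a + b) ≤ max (v a) (v b))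
variable (hzero : ∀ a : L, v a = 0 ↔ a = 0)
variable (htriv : ∀ c : k, c ≠ 0 → v (algebraMap k L c) = 1)

instance ptNonempty : Nonempty (A →ₐ[k] k) := ⟨Bialgebra.counitAlgHom k A⟩

/-- the convolution inverse of a point, as a point -/
noncomputable def invPt (g₀ : A →ₐ[k] k) : A →ₐ[k] k :=
  AlgHom.ofLinearMap (invPtL g₀) (invPtL_one g₀) (invPtL_mul g₀)

lemma convPt_invPt (g₀ : A →ₐ[k] k) :
    convPt (invPt g₀) g₀ = Bialgebra.counitAlgHom k A := by
  ext f
  obtain r := Coalgebra.Repr.arbitrary k f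
  rw [convPt_apply, ptTranslate_repr _ f r, map_sum, Bialgebra.counitAlgHom_apply,
    ← invPtL_F1 g₀ r]
  refine Finset.sum_congr rfl fun i _ => ?_
  rw [map_smul, smul_eq_mul]
  rfl

lemma exists_conv_eq (g₀ h : A →ₐ[k] k) : ∃ g : A →ₐ[k] k, convPt g g₀ = h :=
  ⟨convPt h (invPt g₀), by rw [convPt_assoc, convPt_invPt, convPt_counit_right]⟩

lemma ptTranslate_mul (g : A →ₐ[k] k) (f₁ f₂ : A) :
    ptTranslate g (f₁ * f₂) = ptTranslate g f₁ * ptTranslate g f₂ := by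
  rw [← ptTranslateA_apply, ← ptTranslateA_apply, ← ptTranslateA_apply, map_mul]

lemma ptTranslate_one (g : A →ₐ[k] k) : ptTranslate g (1 : A) = 1 := by
  rw [← ptTranslateA_apply, map_one]

lemma ptTranslate_zero (g : A →ₐ[k] k) : ptTranslate g (0 : A) = 0 := by
  rw [ptTranslate_eq_L, map_zero]

lemma ptTranslate_add (g : A →ₐ[k] k) (f₁ f₂ : A) :
    ptTranslate g (f₁ + f₂) = ptTranslate g f₁ + ptTranslate g f₂ := by
  rw [ptTranslate_eq_L g (f₁ + f₂), ptTranslate_eq_L g f₁, ptTranslate_eq_L g f₂, map_add]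

lemma ptTranslate_algebraMap (g : A →ₐ[k] k) (c : k) :
    ptTranslate g (algebraMap k A c) = algebraMap k A c := by
  rw [← ptTranslateA_apply, AlgHom.commutes]

include hmul hadd hzero htriv in
lemma normx_bddAbove (f : A) :
    BddAbove (Set.range fun g : A →ₐ[k] k => v (x (ptTranslate g f))) := by
  classical
  obtain r := Coalgebra.Repr.arbitrary k f
  refine ⟨(r.index).sup fun i => v (x (r.right i)), fun y hy => ?_⟩
  obtain ⟨g, rfl⟩ := hy
  show v (x (ptTranslate g f)) ≤ _
  rw [ptTranslate_repr _ f r, map_sum]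
  refine v_sum_le hadd hzero _ _ _ fun i hi => ?_
  rw [map_smul]
  exact (v_smul_le hmul hzero htriv _ _).trans
    (Finset.le_sup (f := fun i => v (x (r.right i))) hi)

include hmul hadd hzero htriv in
lemma pt_le_normx (f : A) (g : A →ₐ[k] k) :
    v (x (ptTranslate g f)) ≤ normx v x f :=
  le_ciSup (normx_bddAbove x hmul hadd hzero htriv f) g

include hmul hadd hzero htriv in
lemma exists_good_F {f : A} (hNf : 0 < normx v x f) :
    ∃ F : A, F ≠ 0 ∧
      ∀ g : A →ₐ[k] k, g F ≠ 0 → v (x (ptTranslate g f)) = normx v x f := by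
  classical
  obtain ⟨n, l, r, hli, heq⟩ := exists_repr_linIndep (Coalgebra.comul (R := k) f)
  have heval : ∀ g : A →ₐ[k] k, x (ptTranslate g f) = ∑ i, g (l i) • x (r i) := by
    intro g
    have hrep := ptTranslate_repr g f ⟨(Finset.univ : Finset (Fin n)), l, r, heq.symm⟩
    dsimp only at hrep
    rw [hrep, map_sum]
    exact Finset.sum_congr rfl fun i _ => map_smul x _ _
  have hsub : Set.range (fun g : A →ₐ[k] k => v (x (ptTranslate g f))) ⊆
      v '' ((Submodule.span k (Set.range fun i => x (r i)) : Submodule k L) : Set L) := by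
    rintro y ⟨g, rfl⟩
    show v (x (ptTranslate g f)) ∈ _
    refine ⟨∑ i, g (l i) • x (r i), ?_, by rw [heval]⟩
    exact Submodule.sum_mem _ fun i _ =>
      Submodule.smul_mem _ _ (Submodule.subset_span ⟨i, rfl⟩)
  have hfinS : (Set.range fun g : A →ₐ[k] k => v (x (ptTranslate g f))).Finite :=
    (finite_v_span hmul hadd hzero htriv _).subset hsub
  have hneS : (Set.range fun g : A →ₐ[k] k => v (x (ptTranslate g f))).Nonempty :=
    Set.range_nonempty _
  obtain ⟨M0, hM0S, hM0max⟩ := Set.Finite.exists_maximalFor id _ hfinS hneS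
  have hM0max' : ∀ y ∈ (Set.range fun g : A →ₐ[k] k => v (x (ptTranslate g f))), y ≤ M0 := by
    intro y hy
    rcases le_total y M0 with h | h
    · exact h
    · exact hM0max hy h
  obtain ⟨g₀, hg₀⟩ := hM0S
  have hg₀N : v (x (ptTranslate g₀ f)) = normx v x f := by
    refine le_antisymm (pt_le_normx x hmul hadd hzero htriv f g₀) ?_
    refine ciSup_le fun g => ?_
    have h1 : v (x (ptTranslate g f)) ≤ M0 := hM0max' _ ⟨g, rfl⟩
    have h2 : v (x (ptTranslate g₀ f)) = M0 := hg₀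
    rw [h2]
    exact h1
  set M := normx v x f with hM
  set D : Submodule k (Fin n → k) :=
    { carrier := {c | v (∑ i, c i • x (r i)) < M}
      add_mem' := by
        intro c d hc hd
        have hsum : (∑ i, (c + d) i • x (r i)) =
            (∑ i, c i • x (r i)) + ∑ i, d i • x (r i) := by
          rw [← Finset.sum_add_distrib]
          exact Finset.sum_congr rfl fun i _ => by rw [Pi.add_apply, add_smul]
        simp only [Set.mem_setOf_eq] at *
        rw [hsum]
        exact lt_of_le_of_lt (hadd _ _) (max_lt hc hd)
      zero_mem' := by
        simp only [Set.mem_setOf_eq, Pi.zero_apply, zero_smul, Finset.sum_const_zero]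
        rw [v_zero hzero]
        exact hNf
      smul_mem' := by
        intro a c hc
        rcases eq_or_ne a 0 with rfl | ha
        · have hzsum : (∑ i, ((0 : k) • c) i • x (r i)) = 0 := by simp
          show v (∑ i, ((0 : k) • c) i • x (r i)) < M
          rw [hzsum, v_zero hzero]
          exact hNf
        · have hsum : (∑ i, (a • c) i • x (r i)) = a • (∑ i, c i • x (r i)) := by
            rw [Finset.smul_sum]
            exact Finset.sum_congr rfl fun i _ => by
              rw [Pi.smul_apply, smul_eq_mul, ← smul_smul]
          simp only [Set.mem_setOf_eq] at *
          rw [hsum, v_smul hmul htriv ha]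
          exact hc } with hD
  have hg₀D : (fun i => g₀ (l i)) ∉ D := by
    intro hmem
    have hlt : v (∑ i, g₀ (l i) • x (r i)) < M := hmem
    rw [← heval g₀] at hlt
    rw [hg₀N] at hlt
    exact lt_irrefl _ hlt
  haveI : Nontrivial ((Fin n → k) ⧸ D) :=
    Submodule.Quotient.nontrivial_iff.mpr
      ((lt_top_iff_ne_top (a := D)).mpr fun htop => hg₀D (htop ▸ Submodule.mem_top)).ne
  set bq := Module.Basis.ofVectorSpace k ((Fin n → k) ⧸ D) with hbq
  obtain ⟨i0⟩ := bq.index_nonempty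
  set ℓ : (Fin n → k) →ₗ[k] k := (bq.coord i0) ∘ₗ D.mkQ with hℓ
  have hℓD : ∀ c ∈ D, ℓ c = 0 := by
    intro c hc
    have : D.mkQ c = 0 := by
      rw [Submodule.mkQ_apply]
      exact (Submodule.Quotient.mk_eq_zero D).mpr hc
    rw [hℓ, LinearMap.comp_apply, this, map_zero]
  have hℓne : ∃ c, ℓ c ≠ 0 := by
    obtain ⟨c, hc⟩ := Submodule.mkQ_surjective D (bq i0)
    refine ⟨c, ?_⟩
    rw [hℓ, LinearMap.comp_apply, hc, Module.Basis.coord_apply, Module.Basis.repr_self,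
      Finsupp.single_eq_same]
    exact one_ne_zero
  set a : Fin n → k := fun i => ℓ (fun j => if i = j then 1 else 0) with ha_def
  have hℓ_sum : ∀ c : Fin n → k, ℓ c = ∑ i, c i * a i := by
    intro c
    have := LinearMap.pi_apply_eq_sum_univ ℓ c
    simpa [smul_eq_mul] using this
  have ha : ∃ i, a i ≠ 0 := by
    by_contra hcon
    push_neg at hcon
    obtain ⟨c, hc⟩ := hℓne
    exact hc (by rw [hℓ_sum]; simp [hcon])
  refine ⟨∑ i, a i • l i, ?_, ?_⟩
  · intro hF0
    obtain ⟨i, hi⟩ := ha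
    exact hi ((Fintype.linearIndependent_iff.mp hli) a hF0 i)
  · intro g hgF
    have hgF' : ℓ (fun i => g (l i)) ≠ 0 := by
      rw [hℓ_sum]
      intro h0
      apply hgF
      rw [map_sum, ← h0]
      exact Finset.sum_congr rfl fun i _ => by rw [map_smul, smul_eq_mul, mul_comm]
    have hnotD : (fun i => g (l i)) ∉ D := fun hmem => hgF' (hℓD _ hmem)
    have hge : M ≤ v (x (ptTranslate g f)) := by
      by_contra hlt
      push_neg at hlt
      apply hnotD
      show v (∑ i, g (l i) • x (r i)) < M
      rw [← heval g]
      exact hlt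
    exact le_antisymm (pt_le_normx x hmul hadd hzero htriv f g) hge

include hmul hadd hzero htriv in
lemma normx_eq_zero_imp (hfg : Algebra.FiniteType k A) {f : A}
    (h : normx v x f = 0) : f = 0 := by
  have hvanish : ∀ f' : A, normx v x f' = 0 → ∀ g : A →ₐ[k] k, x (ptTranslate g f') = 0 := by
    intro f' hf' g
    refine (hzero _).mp (le_antisymm ?_ zero_le)
    exact le_of_le_of_eq (pt_le_normx x hmul hadd hzero htriv f' g) hf'
  have hf0 : ∀ g : A →ₐ[k] k, x (ptTranslate g f) = 0 := hvanish f h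
  set I : Ideal A :=
    { carrier := {f' | ∀ g : A →ₐ[k] k, x (ptTranslate g f') = 0}
      add_mem' := by
        intro c d hc hd
        have hc' : ∀ g : A →ₐ[k] k, x (ptTranslate g c) = 0 := hc
        have hd' : ∀ g : A →ₐ[k] k, x (ptTranslate g d) = 0 := hd
        intro g
        rw [ptTranslate_add, map_add, hc' g, hd' g, add_zero]
      zero_mem' := by
        intro g
        rw [ptTranslate_zero, map_zero]
      smul_mem' := by
        intro c f' hf'
        have hf'' : ∀ g : A →ₐ[k] k, x (ptTranslate g f') = 0 := hf'
        intro g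
        rw [smul_eq_mul, ptTranslate_mul, map_mul, hf'' g, mul_zero] } with hI
  have hInetop : I ≠ ⊤ := by
    intro htop
    have h1 : (1 : A) ∈ I := by rw [htop]; exact Submodule.mem_top
    have h2 : ∀ g : A →ₐ[k] k, x (ptTranslate g (1 : A)) = 0 := h1
    have := h2 (Bialgebra.counitAlgHom k A)
    rw [ptTranslate_one, map_one] at this
    exact one_ne_zero this
  obtain ⟨g₀, hg₀⟩ := idealPoint hfg I hInetop
  have hstab : ∀ f' ∈ I, ∀ g : A →ₐ[k] k, ptTranslate g f' ∈ I := by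
    intro f' hf' g g'
    rw [ptTranslate_ptTranslate]
    exact hf' _
  have hall : ∀ h' : A →ₐ[k] k, h' f = 0 := by
    intro h'
    obtain ⟨g, hg⟩ := exists_conv_eq g₀ h'
    rw [← hg, convPt_apply]
    exact hg₀ _ (hstab f hf0 g)
  exact pointsVanish hfg hall

end Main

/-- `‖·‖ₓ` is a multiplicative non-Archimedean norm on `A` extending the trivial
valuation on `k`. -/
theorem statement2
    {k A L : Type*} [Field k] [IsAlgClosed k]
    [CommRing A] [IsDomain A] [HopfAlgebra k A]
    (hfg : Algebra.FiniteType k A)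
    [Field L] [Algebra k L]
    (v : L → NNReal)
    (hmul : ∀ a b : L, v (a * b) = v a * v b)
    (hadd : ∀ a b : L, v (a + b) ≤ max (v a) (v b))
    (hzero : ∀ a : L, v a = 0 ↔ a = 0)
    (htriv : ∀ c : k, c ≠ 0 → v (algebraMap k L c) = 1)
    (x : A →ₐ[k] L) :
    normx v x (1 : A) = 1 ∧
    (∀ f : A, normx v x f = 0 ↔ f = 0) ∧
    (∀ f₁ f₂ : A, normx v x (f₁ * f₂) = normx v x f₁ * normx v x f₂) ∧
    (∀ f₁ f₂ : A, normx v x (f₁ + f₂) ≤ max (normx v x f₁) (normx v x f₂)) ∧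
    (∀ c : k, c ≠ 0 → ∀ f : A, normx v x (algebraMap k A c * f) = normx v x f) := by
  have hone : normx v x (1 : A) = 1 := by
    rw [normx]
    have h1 : (fun g : A →ₐ[k] k => v (x (ptTranslate g (1 : A)))) = fun _ => 1 := by
      funext g
      rw [ptTranslate_one, map_one, v_one hmul hzero]
    rw [h1]
    exact ciSup_const
  have hzero0 : normx v x (0 : A) = 0 := by
    rw [normx]
    have h1 : (fun g : A →ₐ[k] k => v (x (ptTranslate g (0 : A)))) = fun _ => 0 := by
      funext g
      rw [ptTranslate_zero, map_zero, v_zero hzero]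
    rw [h1]
    exact ciSup_const
  refine ⟨hone, ?_, ?_, ?_, ?_⟩
  · intro f
    exact ⟨fun h => normx_eq_zero_imp x hmul hadd hzero htriv hfg h, fun h => h ▸ hzero0⟩
  · intro f₁ f₂
    have hle : normx v x (f₁ * f₂) ≤ normx v x f₁ * normx v x f₂ := by
      refine ciSup_le fun g => ?_
      rw [ptTranslate_mul, map_mul, hmul]
      exact mul_le_mul' (pt_le_normx x hmul hadd hzero htriv f₁ g)
        (pt_le_normx x hmul hadd hzero htriv f₂ g)
    rcases eq_or_ne f₁ 0 with rfl | h1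
    · rw [zero_mul, hzero0, zero_mul]
    rcases eq_or_ne f₂ 0 with rfl | h2
    · rw [mul_zero, hzero0, mul_zero]
    have hp1 : 0 < normx v x f₁ := pos_iff_ne_zero.mpr
      (fun h0 => h1 (normx_eq_zero_imp x hmul hadd hzero htriv hfg h0))
    have hp2 : 0 < normx v x f₂ := pos_iff_ne_zero.mpr
      (fun h0 => h2 (normx_eq_zero_imp x hmul hadd hzero htriv hfg h0))
    obtain ⟨F₁, hF₁0, hF₁⟩ := exists_good_F x hmul hadd hzero htriv hp1
    obtain ⟨F₂, hF₂0, hF₂⟩ := exists_good_F x hmul hadd hzero htriv hp2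
    obtain ⟨g, hg⟩ := existsPointNe hfg (mul_ne_zero hF₁0 hF₂0)
    rw [map_mul] at hg
    have hg1 : g F₁ ≠ 0 := left_ne_zero_of_mul hg
    have hg2 : g F₂ ≠ 0 := right_ne_zero_of_mul hg
    refine le_antisymm hle ?_
    have hval : v (x (ptTranslate g (f₁ * f₂))) = normx v x f₁ * normx v x f₂ := by
      rw [ptTranslate_mul, map_mul, hmul, hF₁ g hg1, hF₂ g hg2]
    rw [← hval]
    exact pt_le_normx x hmul hadd hzero htriv (f₁ * f₂) g
  · intro f₁ f₂
    refine ciSup_le fun g => ?_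
    rw [ptTranslate_add, map_add]
    refine (hadd _ _).trans ?_
    exact max_le_max (pt_le_normx x hmul hadd hzero htriv f₁ g)
      (pt_le_normx x hmul hadd hzero htriv f₂ g)
  · intro c hc f
    rw [normx, normx]
    refine iSup_congr fun g => ?_
    rw [ptTranslate_mul, ptTranslate_algebraMap, map_mul, AlgHom.commutes, hmul,
      htriv c hc, one_mul]
end

section
/- The norm ‖·‖_x is invariant under translation by k-points: for every k-algebra homomorphism g : A → k and every f ∈ A, one has ‖g•f‖_x = ‖f‖_x. -/
open TensorProduct

section Aux

open Coalgebra

variable {k A : Type*} [CommSemiring k] [Semiring A] [Bialgebra k A]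

/-- Translation by a linear functional. -/
noncomputable def Tmap (φ : A →ₗ[k] k) : A →ₗ[k] A :=
  (TensorProduct.lid k A).toLinearMap ∘ₗ
    (TensorProduct.map φ (LinearMap.id : A →ₗ[k] A)) ∘ₗ Coalgebra.comul

/-- Convolution product of two linear functionals. -/
noncomputable def convF (φ ψ : A →ₗ[k] k) : A →ₗ[k] k :=
  (TensorProduct.lid k k).toLinearMap ∘ₗ (TensorProduct.map φ ψ) ∘ₗ Coalgebra.comul

lemma ptTranslate_eq (g : A →ₐ[k] k) (f : A) :
    ptTranslate g f = Tmap (g.toLinearMap) f := rfl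

lemma Tmap_repr (φ : A →ₗ[k] k) {a : A} {ι : Type*} (r : Coalgebra.Repr k a ι) :
    Tmap φ a = ∑ i ∈ r.index, φ (r.left i) • r.right i := by
  rw [Tmap]
  simp only [LinearMap.coe_comp, Function.comp_apply, LinearEquiv.coe_coe, ← r.eq, map_sum,
    TensorProduct.map_tmul, LinearMap.id_coe, id_eq, TensorProduct.lid_tmul]

lemma convF_repr (φ ψ : A →ₗ[k] k) {a : A} {ι : Type*} (r : Coalgebra.Repr k a ι) :
    convF φ ψ a = ∑ i ∈ r.index, φ (r.left i) * ψ (r.right i) := by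
  rw [convF]
  simp only [LinearMap.coe_comp, Function.comp_apply, LinearEquiv.coe_coe, ← r.eq, map_sum,
    TensorProduct.map_tmul, TensorProduct.lid_tmul, smul_eq_mul]

lemma counit_Tmap (φ : A →ₗ[k] k) (a : A) :
    Coalgebra.counit (R := k) (Tmap φ a) = φ a := by
  let r := ℛ k a
  have h2 := congrArg ((TensorProduct.lid k k).toLinearMap ∘ₗ
    TensorProduct.map φ (LinearMap.id : k →ₗ[k] k)) (Coalgebra.sum_tmul_counit_eq r)
  simp only [map_sum, LinearMap.coe_comp, Function.comp_apply, LinearEquiv.coe_coe,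
    TensorProduct.map_tmul, LinearMap.id_coe, id_eq, TensorProduct.lid_tmul, smul_eq_mul,
    mul_one] at h2
  rw [Tmap_repr φ r, map_sum]
  simpa [smul_eq_mul, mul_comm] using h2

lemma Tmap_counit (a : A) :
    Tmap (Coalgebra.counit : A →ₗ[k] k) a = a := by
  rw [Tmap]
  have : TensorProduct.map (Coalgebra.counit : A →ₗ[k] k) (LinearMap.id : A →ₗ[k] A)
      = LinearMap.rTensor A (Coalgebra.counit : A →ₗ[k] k) := rfl
  simp [this]

lemma Tmap_Tmap (φ ψ : A →ₗ[k] k) (a : A) :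
    Tmap ψ (Tmap φ a) = Tmap (convF φ ψ) a := by
  let r := ℛ k a
  let r1 : (i : A × A) → Coalgebra.Repr k (r.left i) (A × A) := fun i => ℛ k (r.left i)
  let r2 : (i : A × A) → Coalgebra.Repr k (r.right i) (A × A) := fun i => ℛ k (r.right i)
  have key := Coalgebra.sum_tmul_tmul_eq r r1 r2
  have happ := congrArg ((TensorProduct.lid k A).toLinearMap ∘ₗ
    TensorProduct.map φ ((TensorProduct.lid k A).toLinearMap ∘ₗ
      TensorProduct.map ψ (LinearMap.id : A →ₗ[k] A))) key
  simp only [map_sum, LinearMap.coe_comp, Function.comp_apply, LinearEquiv.coe_coe,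
    TensorProduct.map_tmul, LinearMap.id_coe, id_eq, TensorProduct.lid_tmul] at happ
  have lhs : Tmap (convF φ ψ) a
      = ∑ i ∈ r.index, ∑ j ∈ (r1 i).index,
        φ ((r1 i).left j) • (ψ ((r1 i).right j) • r.right i) := by
    rw [Tmap_repr (convF φ ψ) r]
    refine Finset.sum_congr rfl fun i _ => ?_
    rw [convF_repr φ ψ (r1 i), Finset.sum_smul]
    exact Finset.sum_congr rfl fun j _ => by rw [smul_smul]
  have rhs : Tmap ψ (Tmap φ a)
      = ∑ i ∈ r.index, ∑ j ∈ (r2 i).index,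
        φ (r.left i) • (ψ ((r2 i).left j) • (r2 i).right j) := by
    rw [Tmap_repr φ r, map_sum]
    refine Finset.sum_congr rfl fun i _ => ?_
    rw [map_smul, Tmap_repr ψ (r2 i), Finset.smul_sum]
  rw [lhs, rhs, happ]

end Aux

section Hopf

open Coalgebra HopfAlgebra

variable {k A : Type*} [CommSemiring k] [Semiring A] [HopfAlgebra k A]

/-- Composition of a point with the antipode. -/
noncomputable def gS (g : A →ₐ[k] k) : A →ₗ[k] k :=
  g.toLinearMap ∘ₗ HopfAlgebra.antipode (R := k)

lemma convF_g_gS (g : A →ₐ[k] k) (a : A) :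
    convF g.toLinearMap (gS g) a = Coalgebra.counit (R := k) a := by
  let r := ℛ k a
  rw [convF_repr _ _ r]
  have : ∀ i ∈ r.index, g.toLinearMap (r.left i) * (gS g) (r.right i)
      = g (r.left i * antipode (R := k) (r.right i)) := by
    intro i _
    simp [gS, map_mul]
  rw [Finset.sum_congr rfl this, ← map_sum, HopfAlgebra.sum_mul_antipode_eq_algebraMap_counit r]
  simpa using g.commutes (Coalgebra.counit (R := k) a)

lemma convF_gS_g (g : A →ₐ[k] k) (a : A) :
    convF (gS g) g.toLinearMap a = Coalgebra.counit (R := k) a := by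
  let r := ℛ k a
  rw [convF_repr _ _ r]
  have : ∀ i ∈ r.index, (gS g) (r.left i) * g.toLinearMap (r.right i)
      = g (antipode (R := k) (r.left i) * r.right i) := by
    intro i _
    simp [gS, map_mul]
  rw [Finset.sum_congr rfl this, ← map_sum, HopfAlgebra.sum_antipode_mul_eq_algebraMap_counit r]
  simpa using g.commutes (Coalgebra.counit (R := k) a)

lemma Tmap_gS_Tmap_g (g : A →ₐ[k] k) (a : A) :
    Tmap (gS g) (Tmap g.toLinearMap a) = a := by
  rw [Tmap_Tmap]
  have : convF g.toLinearMap (gS g) = (Coalgebra.counit : A →ₗ[k] k) :=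
    LinearMap.ext (convF_g_gS g)
  rw [this, Tmap_counit]

lemma Tmap_g_Tmap_gS (g : A →ₐ[k] k) (a : A) :
    Tmap g.toLinearMap (Tmap (gS g) a) = a := by
  rw [Tmap_Tmap]
  have : convF (gS g) g.toLinearMap = (Coalgebra.counit : A →ₗ[k] k) :=
    LinearMap.ext (convF_gS_g g)
  rw [this, Tmap_counit]

/-- Translation by a point, as an algebra homomorphism. -/
noncomputable def TAlgHom (g : A →ₐ[k] k) : A →ₐ[k] A :=
  ((Algebra.TensorProduct.lid k A).toAlgHom.comp
    (Algebra.TensorProduct.map g (AlgHom.id k A))).comp (Bialgebra.comulAlgHom k A)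

lemma TAlgHom_apply (g : A →ₐ[k] k) (a : A) :
    TAlgHom g a = Tmap g.toLinearMap a := by
  have key : ∀ t : A ⊗[k] A,
      (Algebra.TensorProduct.lid k A) ((Algebra.TensorProduct.map g (AlgHom.id k A)) t)
      = (TensorProduct.lid k A) ((TensorProduct.map g.toLinearMap
          (LinearMap.id : A →ₗ[k] A)) t) := by
    intro t
    induction t using TensorProduct.induction_on with
    | zero => simp
    | tmul x y => simp [Algebra.TensorProduct.lid_tmul]
    | add s t hs ht => simp [map_add, hs, ht]
  exact key (Coalgebra.comul a)

/-- Translation by a point, as an algebra automorphism. -/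
noncomputable def TAlgEquiv (g : A →ₐ[k] k) : A ≃ₐ[k] A :=
  AlgEquiv.ofBijective (TAlgHom g) <| by
    constructor
    · intro a b hab
      have := congrArg (Tmap (gS g)) hab
      rwa [TAlgHom_apply, TAlgHom_apply, Tmap_gS_Tmap_g, Tmap_gS_Tmap_g] at this
    · intro b
      refine ⟨Tmap (gS g) b, ?_⟩
      rw [TAlgHom_apply, Tmap_g_Tmap_gS]

lemma TAlgEquiv_symm_apply (g : A →ₐ[k] k) (a : A) :
    (TAlgEquiv g).symm a = Tmap (gS g) a := by
  apply (TAlgEquiv g).injective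
  rw [AlgEquiv.apply_symm_apply]
  have : (TAlgEquiv g) (Tmap (gS g) a) = TAlgHom g (Tmap (gS g) a) := rfl
  rw [this, TAlgHom_apply, Tmap_g_Tmap_gS]

end Hopf

section Final

open Coalgebra

variable {k A : Type*} [CommSemiring k] [Semiring A] [HopfAlgebra k A]

lemma convF_eq_counit_Tmap (φ ψ : A →ₗ[k] k) (a : A) :
    convF φ ψ a = Coalgebra.counit (R := k) (Tmap ψ (Tmap φ a)) := by
  rw [Tmap_Tmap, counit_Tmap]

lemma exists_forward (g g' : A →ₐ[k] k) :
    ∃ h : A →ₐ[k] k, ∀ f, ptTranslate g' (ptTranslate g f) = ptTranslate h f := by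
  refine ⟨(Bialgebra.counitAlgHom k A).comp ((TAlgHom g').comp (TAlgHom g)), fun f => ?_⟩
  have hlin : ((Bialgebra.counitAlgHom k A).comp ((TAlgHom g').comp (TAlgHom g))).toLinearMap
      = convF g.toLinearMap g'.toLinearMap := by
    ext a
    simp only [AlgHom.comp_toLinearMap, LinearMap.coe_comp, Function.comp_apply]
    rw [convF_eq_counit_Tmap]
    show Coalgebra.counit (TAlgHom g' (TAlgHom g a)) = _
    rw [TAlgHom_apply, TAlgHom_apply]
  rw [ptTranslate_eq, ptTranslate_eq, ptTranslate_eq, Tmap_Tmap, hlin]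

lemma exists_backward (g h : A →ₐ[k] k) :
    ∃ g' : A →ₐ[k] k, ∀ f, ptTranslate g' (ptTranslate g f) = ptTranslate h f := by
  refine ⟨(Bialgebra.counitAlgHom k A).comp
    ((TAlgHom h).comp (TAlgEquiv g).symm.toAlgHom), fun f => ?_⟩
  set g' : A →ₐ[k] k := (Bialgebra.counitAlgHom k A).comp
    ((TAlgHom h).comp (TAlgEquiv g).symm.toAlgHom) with hg'
  have hlin : g'.toLinearMap = convF (gS g) h.toLinearMap := by
    ext a
    show Coalgebra.counit (TAlgHom h ((TAlgEquiv g).symm a)) = _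
    rw [TAlgHom_apply, TAlgEquiv_symm_apply, convF_eq_counit_Tmap]
  have key : convF g.toLinearMap g'.toLinearMap = h.toLinearMap := by
    ext a
    rw [convF_eq_counit_Tmap, hlin, ← Tmap_Tmap, Tmap_gS_Tmap_g, counit_Tmap]
  rw [ptTranslate_eq, ptTranslate_eq, ptTranslate_eq, Tmap_Tmap, key]

end Final


/-- `‖·‖ₓ` is invariant under translation by `k`-points: `‖g • f‖ₓ = ‖f‖ₓ`. -/
theorem statement3
    {k A L : Type*} [Field k] [IsAlgClosed k]
    [CommRing A] [IsDomain A] [HopfAlgebra k A]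
    (hfg : Algebra.FiniteType k A)
    [Field L] [Algebra k L]
    (v : L → NNReal)
    (hmul : ∀ a b : L, v (a * b) = v a * v b)
    (hadd : ∀ a b : L, v (a + b) ≤ max (v a) (v b))
    (hzero : ∀ a : L, v a = 0 ↔ a = 0)
    (htriv : ∀ c : k, c ≠ 0 → v (algebraMap k L c) = 1)
    (x : A →ₐ[k] L) :
    ∀ (g : A →ₐ[k] k) (f : A), normx v x (ptTranslate g f) = normx v x f := by
  intro g f
  have hrange : Set.range (fun g' : A →ₐ[k] k => v (x (ptTranslate g' (ptTranslate g f))))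
      = Set.range (fun h : A →ₐ[k] k => v (x (ptTranslate h f))) := by
    apply Set.eq_of_subset_of_subset
    · rintro _ ⟨g', rfl⟩
      obtain ⟨h, hh⟩ := exists_forward g g'
      exact ⟨h, by dsimp only; rw [hh f]⟩
    · rintro _ ⟨h, rfl⟩
      obtain ⟨g', hg'⟩ := exists_backward g h
      exact ⟨g', by dsimp only; rw [hg' f]⟩
  rw [normx, normx, ← sSup_range, ← sSup_range, hrange]
end
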